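/- arXiv:cs/0607095 — 2 statements merged into one kernel-verified Lean document; each statement's English description precedes it below -/
import Mathlib

section
/- For the random coding exponent function ˜E₀(ρ,β,N) = C(ρ,β) − (1/N) ln E[det(I_m + γΘ/(β(1+ρ)))^{-Nρ}] with C(ρ,β) = (1+ρ)(n_T−β) + n_T(1+ρ)ln(β/n_T), one has ˜E₀(ρ,β,N) ≤ ˜E₀(ρ,β,N−1) for every integer N ≥ 2 (the exponent is nonincreasing in the coherence time N). -/
open Matrix MeasureTheory
open scoped ComplexOrder

/-- Channel-incurable effect: the random coding exponent
`˜E₀(ρ,β,N) = C(ρ,β) − (1/N) ln E[det(I + γΘ/(β(1+ρ)))^{-Nρ}]` is nonincreasing in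
the coherence time `N`. -/
theorem stmt_9 {W : Type*} [MeasureSpace W] (μ : Measure W) [IsProbabilityMeasure μ]
    (m : ℕ) (ρ β nT γ : ℝ) (hρ0 : 0 ≤ ρ) (hρ1 : ρ ≤ 1) (hnT : 0 < nT)
    (hβ : β ∈ Set.Ioc (0 : ℝ) nT) (hγ : 0 < γ)
    (Θ : W → Matrix (Fin m) (Fin m) ℂ) (hΘ : ∀ ω, (Θ ω).PosSemidef)
    (hint : ∀ N : ℕ, Integrable (fun ω =>
      (((1 : Matrix (Fin m) (Fin m) ℂ)
        + (γ / (β * (1 + ρ))) • Θ ω).det.re) ^ (-((N : ℝ) * ρ))) μ)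
    (E₀ : ℕ → ℝ)
    (hE₀ : ∀ N : ℕ, E₀ N = (1 + ρ) * (nT - β) + nT * (1 + ρ) * Real.log (β / nT)
        - (1 / (N : ℝ)) * Real.log (∫ ω,
            (((1 : Matrix (Fin m) (Fin m) ℂ)
              + (γ / (β * (1 + ρ))) • Θ ω).det.re) ^ (-((N : ℝ) * ρ)) ∂μ)) :
    ∀ N : ℕ, 2 ≤ N → E₀ N ≤ E₀ (N - 1) := by
  set c : ℝ := γ / (β * (1 + ρ)) with hc_def
  have hc : 0 ≤ c := div_nonneg hγ.le (by nlinarith [hβ.1])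
  set D : W → ℝ := fun ω => ((1 : Matrix (Fin m) (Fin m) ℂ) + c • Θ ω).det.re with hD_def
  have hD : ∀ ω, 0 < D ω := by
    intro ω
    have hsm : (c • Θ ω).PosSemidef := by
      obtain ⟨h1, h2⟩ := hΘ ω
      refine ⟨?_, ?_⟩
      · show (c • Θ ω)ᴴ = c • Θ ω
        rw [conjTranspose_smul, star_trivial, h1]
      · exact ((hΘ ω).smul hc).2
    have hpd : ((1 : Matrix (Fin m) (Fin m) ℂ) + c • Θ ω).PosDef :=
      Matrix.PosDef.add_posSemidef Matrix.PosDef.one hsm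
    have := (Complex.lt_def.mp hpd.det_pos).1
    simpa using this
  intro N hN
  set f : ℕ → W → ℝ := fun K ω => D ω ^ (-((K : ℝ) * ρ)) with hf_def
  have hf_pos : ∀ K ω, 0 < f K ω := fun K ω => Real.rpow_pos_of_pos (hD ω) _
  -- integrals are positive
  have hIpos : ∀ K : ℕ, 0 < ∫ ω, f K ω ∂μ := by
    intro K
    rw [integral_pos_iff_support_of_nonneg (fun ω => (hf_pos K ω).le) (hint K)]
    have : Function.support (f K) = Set.univ :=
      Set.eq_univ_of_forall fun ω => (hf_pos K ω).ne'
    rw [this]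
    simp
  -- set up Hölder
  have hN1 : (1 : ℕ) ≤ N := le_trans (by norm_num) hN
  have hNR : (2 : ℝ) ≤ (N : ℝ) := by exact_mod_cast hN
  have hMcast : ((N - 1 : ℕ) : ℝ) = (N : ℝ) - 1 := by
    rw [Nat.cast_sub hN1, Nat.cast_one]
  set p : ℝ := (N : ℝ) / ((N : ℝ) - 1) with hp_def
  set q : ℝ := (N : ℝ) with hq_def
  have hM1 : (0 : ℝ) < (N : ℝ) - 1 := by linarith
  have hp1 : 1 < p := by
    rw [hp_def, lt_div_iff₀ hM1]; linarith
  have hpq : Real.HolderConjugate p q := by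
    rw [Real.holderConjugate_iff]
    constructor
    · exact hp1
    · rw [hp_def, hq_def]
      field_simp
      ring
  have hp_pos : 0 < p := lt_trans zero_lt_one hp1
  have htoReal : (ENNReal.ofReal p).toReal = p := ENNReal.toReal_ofReal hp_pos.le
  have hpne0 : ENNReal.ofReal p ≠ 0 := by
    simp [ENNReal.ofReal_eq_zero, not_le, hp_pos]
  -- key pointwise identity : f (N-1) ^ p = f N
  have hkey : (fun ω => ‖f (N - 1) ω‖ ^ (ENNReal.ofReal p).toReal) = f N := by
    funext ω
    rw [htoReal, Real.norm_of_nonneg (hf_pos _ ω).le, hf_def]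
    dsimp only
    rw [← Real.rpow_mul (hD ω).le]
    congr 1
    rw [hMcast, hp_def, hq_def]
    field_simp [hM1.ne']
  have hfM : MemLp (f (N - 1)) (ENNReal.ofReal p) μ := by
    refine (memLp_norm_rpow_iff (hint (N - 1)).aestronglyMeasurable hpne0
      ENNReal.ofReal_ne_top).mp ?_
    rw [ENNReal.div_self hpne0 ENNReal.ofReal_ne_top, hkey]
    exact memLp_one_iff_integrable.mpr (hint N)
  have hg : MemLp (fun _ : W => (1 : ℝ)) (ENNReal.ofReal q) μ := memLp_const 1
  have hHolder := integral_mul_le_Lp_mul_Lq_of_nonneg (μ := μ) hpq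
    (Filter.Eventually.of_forall fun ω => (hf_pos (N - 1) ω).le)
    (Filter.Eventually.of_forall fun _ => zero_le_one) hfM hg
  -- simplify Hölder
  have hA : ∫ ω, f (N - 1) ω * 1 ∂μ = ∫ ω, f (N - 1) ω ∂μ := by simp
  have hB : ∫ ω, f (N - 1) ω ^ p ∂μ = ∫ ω, f N ω ∂μ := by
    refine integral_congr_ae (Filter.Eventually.of_forall fun ω => ?_)
    have := congrFun hkey ω
    rwa [htoReal, Real.norm_of_nonneg (hf_pos _ ω).le] at this
  have hC : ∫ ω, (1 : ℝ) ^ q ∂μ = 1 := by simp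
  rw [hA, hB, hC, Real.one_rpow, mul_one] at hHolder
  -- take logs
  have hlog : Real.log (∫ ω, f (N - 1) ω ∂μ) ≤ (1 / p) * Real.log (∫ ω, f N ω ∂μ) := by
    calc Real.log (∫ ω, f (N - 1) ω ∂μ)
        ≤ Real.log ((∫ ω, f N ω ∂μ) ^ (1 / p)) := Real.log_le_log (hIpos (N - 1)) hHolder
      _ = (1 / p) * Real.log (∫ ω, f N ω ∂μ) := Real.log_rpow (hIpos N) _
  -- conclude
  rw [hE₀ N, hE₀ (N - 1)]
  have goal : (1 / ((N - 1 : ℕ) : ℝ)) * Real.log (∫ ω, f (N - 1) ω ∂μ)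
      ≤ (1 / (N : ℝ)) * Real.log (∫ ω, f N ω ∂μ) := by
    rw [hMcast]
    have h2 : (1 / ((N : ℝ) - 1)) * Real.log (∫ ω, f (N - 1) ω ∂μ)
        ≤ (1 / ((N : ℝ) - 1)) * ((1 / p) * Real.log (∫ ω, f N ω ∂μ)) :=
      mul_le_mul_of_nonneg_left hlog (by positivity)
    refine le_trans h2 (le_of_eq ?_)
    rw [hp_def]
    field_simp
    rw [hq_def]
    ring
  linarith [goal]
end

section
/- The cutoff rate R₀ = −(1/N_c)·ln E[det(I_m + (γ/(2n_T))Θ)^{-N_c}] is strictly decreasing in N_c whenever the random variable det(I_m + (γ/(2n_T))Θ) is non-degenerate, and R₀ → 0 as N_c → ∞ when det(I + (γ/(2n_T))Θ) has essential infimum 1 (i.e., Θ takes values near 0 with positive probability). -/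
open Matrix MeasureTheory Filter
open scoped ComplexOrder

section AuxMatrix

lemma aux_det_re_ge_one {m : ℕ} (c : ℝ) (hc : 0 ≤ c) (M : Matrix (Fin m) (Fin m) ℂ)
    (hM : M.PosSemidef) :
    1 ≤ ((1 : Matrix (Fin m) (Fin m) ℂ) + c • M).det.re := by
  have hH := hM.1
  set U : Matrix (Fin m) (Fin m) ℂ := (hH.eigenvectorUnitary : Matrix (Fin m) (Fin m) ℂ) with hUdef
  have hU : U * star U = 1 := (Matrix.mem_unitaryGroup_iff).mp hH.eigenvectorUnitary.2
  set μ := hH.eigenvalues with hμ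
  have hμnn : ∀ i, 0 ≤ μ i := fun i => hM.eigenvalues_nonneg i
  have key : (1 : Matrix (Fin m) (Fin m) ℂ) + c • M
      = U * diagonal (fun i => ((1 + c * μ i : ℝ) : ℂ)) * star U := by
    have h1 : (1 : Matrix (Fin m) (Fin m) ℂ) + c • M
        = U * ((1 : Matrix (Fin m) (Fin m) ℂ) + c • diagonal (RCLike.ofReal ∘ μ)) * star U := by
      rw [mul_add, add_mul]
      congr 1
      · rw [mul_one, hU]
      · rw [mul_smul_comm, smul_mul_assoc]
        exact congrArg (c • ·) hH.spectral_theorem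
    rw [h1]
    congr 2
    rw [← diagonal_one, ← diagonal_smul, diagonal_add]
    congr 1
    ext i
    simp only [Pi.add_apply, Pi.smul_apply, Function.comp_apply, Complex.real_smul]
    push_cast
    ring_nf
    rfl
  have hdet : ((1 : Matrix (Fin m) (Fin m) ℂ) + c • M).det
      = ((∏ i, (1 + c * μ i) : ℝ) : ℂ) := by
    rw [key, det_mul_right_comm, hU, one_mul, det_diagonal]
    push_cast
    rfl
  rw [hdet, Complex.ofReal_re]
  have := Finset.prod_le_prod (s := Finset.univ) (f := fun _ : Fin m => (1:ℝ))
    (g := fun i => 1 + c * μ i) (fun i _ => zero_le_one)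
    (fun i _ => by have h := mul_nonneg hc (hμnn i); show (1:ℝ) ≤ 1 + c * μ i; linarith)
  simpa using this

end AuxMatrix

section AuxProb

variable {W : Type*} [MeasureSpace W] {μ : Measure W} [IsProbabilityMeasure μ]
variable {X : W → ℝ}

lemma aux_integrable (hXmeas : Measurable X) (h0 : ∀ ω, 0 < X ω) (h1 : ∀ ω, X ω ≤ 1) (N : ℕ) :
    Integrable (fun ω => X ω ^ N) μ := by
  refine Integrable.mono' (integrable_const 1) ((hXmeas.pow_const N).aestronglyMeasurable) ?_
  filter_upwards with ω
  rw [Real.norm_eq_abs, abs_of_nonneg (pow_nonneg (h0 ω).le N)]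
  exact pow_le_one₀ (h0 ω).le (h1 ω)

lemma aux_int_pos (hXmeas : Measurable X) (h0 : ∀ ω, 0 < X ω) (h1 : ∀ ω, X ω ≤ 1) (N : ℕ) :
    0 < ∫ ω, X ω ^ N ∂μ := by
  rw [integral_pos_iff_support_of_nonneg (fun ω => pow_nonneg (h0 ω).le N)
    (aux_integrable hXmeas h0 h1 N)]
  have hsupp : Function.support (fun ω => X ω ^ N) = Set.univ :=
    Set.eq_univ_of_forall fun ω => (pow_pos (h0 ω) N).ne'
  rw [hsupp]
  simp

lemma aux_int_le_one (hXmeas : Measurable X) (h0 : ∀ ω, 0 < X ω) (h1 : ∀ ω, X ω ≤ 1) (N : ℕ) :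
    ∫ ω, X ω ^ N ∂μ ≤ 1 := by
  have := integral_mono (μ := μ) (aux_integrable hXmeas h0 h1 N) (integrable_const 1)
    (fun ω => pow_le_one₀ (h0 ω).le (h1 ω))
  simpa using this

/-- Strict Cauchy–Schwarz / log-convexity of moments for a non-a.e.-constant variable. -/
lemma aux_cs (hXmeas : Measurable X) (h0 : ∀ ω, 0 < X ω) (h1 : ∀ ω, X ω ≤ 1)
    (hnondeg : ¬ ∃ c : ℝ, ∀ᵐ ω ∂μ, X ω = c) (k : ℕ) :
    (∫ ω, X ω ^ (k + 1) ∂μ) ^ 2 < (∫ ω, X ω ^ k ∂μ) * (∫ ω, X ω ^ (k + 2) ∂μ) := by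
  set ν : Measure (W × W) := μ.prod μ with hν
  have hmf : Measurable fun p : W × W => X p.1 := hXmeas.comp measurable_fst
  have hms : Measurable fun p : W × W => X p.2 := hXmeas.comp measurable_snd
  set g : W × W → ℝ := fun p => X p.1 ^ k * X p.2 ^ k * (X p.1 - X p.2) ^ 2 with hg
  have hgmeas : Measurable g := ((hmf.pow_const k).mul (hms.pow_const k)).mul
    ((hmf.sub hms).pow_const 2)
  have hgnn : ∀ p, 0 ≤ g p := fun p =>
    mul_nonneg (mul_nonneg (pow_nonneg (h0 _).le k) (pow_nonneg (h0 _).le k)) (sq_nonneg _)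
  have hgbd : ∀ p, g p ≤ 1 := by
    intro p
    have h2 : (X p.1 - X p.2) ^ 2 ≤ 1 := by
      rw [sq_le_one_iff_abs_le_one]
      have := h0 p.1; have := h1 p.1; have := h0 p.2; have := h1 p.2
      rw [abs_le]
      constructor <;> linarith
    show X p.1 ^ k * X p.2 ^ k * (X p.1 - X p.2) ^ 2 ≤ 1
    have hA : X p.1 ^ k * X p.2 ^ k ≤ 1 * 1 :=
      mul_le_mul (pow_le_one₀ (h0 _).le (h1 _)) (pow_le_one₀ (h0 _).le (h1 _))
        (pow_nonneg (h0 _).le k) zero_le_one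
    have hB : X p.1 ^ k * X p.2 ^ k * (X p.1 - X p.2) ^ 2 ≤ (1 * 1) * 1 :=
      mul_le_mul hA h2 (sq_nonneg _) (by norm_num)
    linarith
  have hgint : Integrable g ν := by
    refine Integrable.mono' (integrable_const 1) hgmeas.aestronglyMeasurable ?_
    filter_upwards with p
    rw [Real.norm_eq_abs, abs_of_nonneg (hgnn p)]
    exact hgbd p
  -- expansion of the integral of g
  have hint : ∀ a b : ℕ, Integrable (fun p : W × W => X p.1 ^ a * X p.2 ^ b) ν :=
    fun a b => (aux_integrable hXmeas h0 h1 a).mul_prod (aux_integrable hXmeas h0 h1 b)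
  have hval : ∀ a b : ℕ, ∫ p, X p.1 ^ a * X p.2 ^ b ∂ν
      = (∫ ω, X ω ^ a ∂μ) * (∫ ω, X ω ^ b ∂μ) :=
    fun a b => integral_prod_mul (fun ω => X ω ^ a) (fun ω => X ω ^ b)
  have hexpand : ∫ p, g p ∂ν = ∫ p, ((X p.1 ^ (k + 2) * X p.2 ^ k
        + X p.1 ^ k * X p.2 ^ (k + 2))
        - 2 * (X p.1 ^ (k + 1) * X p.2 ^ (k + 1))) ∂ν := by
    apply integral_congr_ae
    filter_upwards with p
    simp only [hg]; ring
  have hgval : ∫ p, g p ∂ν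
      = ((∫ ω, X ω ^ (k + 2) ∂μ) * (∫ ω, X ω ^ k ∂μ)
          + (∫ ω, X ω ^ k ∂μ) * (∫ ω, X ω ^ (k + 2) ∂μ))
        - 2 * ((∫ ω, X ω ^ (k + 1) ∂μ) * (∫ ω, X ω ^ (k + 1) ∂μ)) := by
    have hadd : Integrable (fun p : W × W =>
        X p.1 ^ (k + 2) * X p.2 ^ k + X p.1 ^ k * X p.2 ^ (k + 2)) ν :=
      (hint (k+2) k).add (hint k (k+2))
    rw [hexpand]
    rw [integral_sub hadd ((hint (k+1) (k+1)).const_mul 2),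
      integral_add (hint (k+2) k) (hint k (k+2)), integral_const_mul,
      hval, hval, hval]
  -- positivity of the integral of g
  have hgpos : 0 < ∫ p, g p ∂ν := by
    rw [integral_pos_iff_support_of_nonneg hgnn hgint]
    by_contra hcon
    push_neg at hcon
    have hz : ν (Function.support g) = 0 := le_antisymm hcon zero_le
    have hsupp : Function.support g = {p : W × W | X p.1 ≠ X p.2} := by
      ext p
      simp only [Function.mem_support, Set.mem_setOf_eq, hg]
      constructor
      · intro hne heq
        apply hne
        rw [heq]; ring
      · intro hne
        have hsub : X p.1 - X p.2 ≠ 0 := sub_ne_zero.mpr hne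
        have h2 : (0:ℝ) < (X p.1 - X p.2) ^ 2 := by positivity
        have := mul_pos (mul_pos (pow_pos (h0 p.1) k) (pow_pos (h0 p.2) k)) h2
        exact this.ne'
    rw [hsupp] at hz
    have hae : ∀ᵐ p ∂ν, X p.1 = X p.2 := by
      rw [ae_iff]
      convert hz using 2
    have h2 := Measure.ae_ae_of_ae_prod hae
    have hne : (ae μ).NeBot := ae_neBot.mpr (IsProbabilityMeasure.ne_zero μ)
    obtain ⟨x, hx⟩ := h2.exists
    exact hnondeg ⟨X x, hx.mono fun y hy => hy.symm⟩
  nlinarith [hgval, hgpos]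

end AuxProb

/-- The cutoff rate `R₀(N_c) = −(1/N_c)·ln E[det(I + (γ/(2n_T))Θ)^{-N_c}]` is strictly
decreasing in `N_c` when `det(I + (γ/(2n_T))Θ)` is non-degenerate, and tends to `0`
as `N_c → ∞` when the essential infimum of the determinant is `1` (i.e. the essential
supremum of its reciprocal `X` is `1`). -/
theorem stmt_18 {W : Type*} [MeasureSpace W] (μ : Measure W) [IsProbabilityMeasure μ]
    (m : ℕ) (nT γ : ℝ) (hnT : 0 < nT) (hγ : 0 < γ)
    (Θ : W → Matrix (Fin m) (Fin m) ℂ) (hΘ : ∀ ω, (Θ ω).PosSemidef)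
    (X : W → ℝ)
    (hX : ∀ ω, X ω = ((((1 : Matrix (Fin m) (Fin m) ℂ)
        + (γ / (2 * nT)) • Θ ω).det.re))⁻¹)
    (hXmeas : Measurable X)
    (hnondeg : ¬ ∃ c : ℝ, ∀ᵐ ω ∂μ, X ω = c)
    (hess : essSup X μ = 1)
    (R₀ : ℕ → ℝ)
    (hR₀ : ∀ N : ℕ, R₀ N = -(1 / (N : ℝ)) * Real.log (∫ ω, (X ω) ^ N ∂μ)) :
    (∀ N : ℕ, 1 ≤ N → R₀ (N + 1) < R₀ N) ∧
      Tendsto (fun N : ℕ => R₀ N) atTop (nhds 0) := by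
  -- pointwise bounds on X
  have hc : (0:ℝ) ≤ γ / (2 * nT) := le_of_lt (div_pos hγ (by linarith))
  have hdet : ∀ ω, 1 ≤ (((1 : Matrix (Fin m) (Fin m) ℂ)
      + (γ / (2 * nT)) • Θ ω).det.re) := fun ω => aux_det_re_ge_one _ hc _ (hΘ ω)
  have h0 : ∀ ω, 0 < X ω := by
    intro ω; rw [hX ω]; exact inv_pos.mpr (lt_of_lt_of_le one_pos (hdet ω))
  have h1 : ∀ ω, X ω ≤ 1 := by
    intro ω; rw [hX ω]
    exact inv_le_one_of_one_le₀ (hdet ω)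
  -- moments
  set a : ℕ → ℝ := fun N => ∫ ω, X ω ^ N ∂μ with ha
  have haN : ∀ N : ℕ, (∫ ω, X ω ^ N ∂μ) = a N := fun _ => rfl
  have hapos : ∀ N, 0 < a N := fun N => aux_int_pos hXmeas h0 h1 N
  have hale : ∀ N, a N ≤ 1 := fun N => aux_int_le_one hXmeas h0 h1 N
  have ha0 : a 0 = 1 := by simp [ha]
  set L : ℕ → ℝ := fun N => Real.log (a N) with hL
  have hL0 : L 0 = 0 := by simp [hL, ha0]
  have hLnonpos : ∀ N, L N ≤ 0 := fun N => Real.log_nonpos (hapos N).le (hale N)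
  set d : ℕ → ℝ := fun k => L (k + 1) - L k with hd
  have hdmono : StrictMono d := by
    apply strictMono_nat_of_lt_succ
    intro k
    have hcs := aux_cs hXmeas h0 h1 hnondeg k
    have hlog : 2 * L (k + 1) < L k + L (k + 2) := by
      have hlt : Real.log ((a (k+1)) ^ 2) < Real.log (a k * a (k + 2)) :=
        Real.log_lt_log (pow_pos (hapos (k+1)) 2) hcs
      rw [Real.log_pow, Real.log_mul (hapos k).ne' (hapos (k+2)).ne'] at hlt
      simpa [hL] using hlt
    simp only [hd]
    have : k + 1 + 1 = k + 2 := rfl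
    rw [this]
    linarith
  have hLsum : ∀ N, L N = ∑ k ∈ Finset.range N, d k := by
    intro N
    rw [hd]
    simp only
    rw [Finset.sum_range_sub (fun k => L k), hL0, sub_zero]
  constructor
  · -- strict decrease
    intro N hN
    have hn : (0:ℝ) < (N : ℝ) := by exact_mod_cast hN
    have hn1 : (0:ℝ) < (N : ℝ) + 1 := by linarith
    -- key: L N < N * d N
    have hkey : L N < (N : ℝ) * d N := by
      rw [hLsum N]
      have hlt : ∑ k ∈ Finset.range N, d k < ∑ _k ∈ Finset.range N, d N := by
        apply Finset.sum_lt_sum_of_nonempty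
        · exact Finset.nonempty_range_iff.mpr (Nat.one_le_iff_ne_zero.mp hN)
        · intro k hk
          exact hdmono (Finset.mem_range.mp hk)
      simpa [Finset.sum_const, Finset.card_range, nsmul_eq_mul] using hlt
    have hLN1 : L (N + 1) = L N + d N := by simp [hd]
    have hmul : ((N : ℝ) + 1) * L N < (N : ℝ) * L (N + 1) := by
      rw [hLN1]; nlinarith [hkey]
    have hdiv : L N / (N : ℝ) < L (N + 1) / ((N : ℝ) + 1) := by
      rw [div_lt_div_iff₀ hn hn1]
      nlinarith [hmul]
    rw [hR₀ N, hR₀ (N + 1), haN N, haN (N + 1)]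
    have goal_eq1 : -(1 / ((N + 1 : ℕ) : ℝ)) * Real.log (a (N + 1))
        = -(L (N + 1) / ((N : ℝ) + 1)) := by
      simp only [hL]; push_cast; ring
    have goal_eq2 : -(1 / (N : ℝ)) * Real.log (a N) = -(L N / (N : ℝ)) := by
      simp only [hL]; ring
    rw [goal_eq1, goal_eq2]
    exact neg_lt_neg hdiv
  · -- limit is 0
    rw [Metric.tendsto_atTop]
    intro ε hε
    -- choose the threshold t
    set t : ℝ := Real.exp (-(ε / 2)) with htdef
    have ht0 : 0 < t := Real.exp_pos _
    have ht1 : t < 1 := Real.exp_lt_one_iff.mpr (by linarith)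
    have htlog : Real.log t = -(ε / 2) := Real.log_exp _
    set S : Set W := {ω | t < X ω} with hS
    have hSmeas : MeasurableSet S := measurableSet_lt measurable_const hXmeas
    -- μ S > 0
    have hSpos : 0 < (μ S).toReal := by
      rcases eq_or_ne (μ S) 0 with hz | hnz
      · exfalso
        have hle : essSup X μ ≤ t := by
          rw [essSup_eq_sInf]
          apply csInf_le
          · refine ⟨0, fun b hb => ?_⟩
            by_contra hb0
            push_neg at hb0
            have : {ω | b < X ω} = Set.univ := Set.eq_univ_of_forall fun ω => lt_of_lt_of_le hb0 (h0 ω).le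
            rw [Set.mem_setOf_eq, this] at hb
            simp [measure_univ] at hb
          · exact hz
        rw [hess] at hle
        linarith
      · exact ENNReal.toReal_pos hnz (measure_lt_top μ S).ne
    set p : ℝ := (μ S).toReal with hp
    have hple : p ≤ 1 := by
      rw [hp]
      exact ENNReal.toReal_le_of_le_ofReal zero_le_one (by simpa using prob_le_one (μ := μ) (s := S))
    -- lower bound for a N
    have hbound : ∀ N : ℕ, t ^ N * p ≤ a N := by
      intro N
      have hint := aux_integrable (μ := μ) hXmeas h0 h1 N
      have h3 : ∫ ω in S, X ω ^ N ∂μ ≤ a N :=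
        setIntegral_le_integral hint (Filter.Eventually.of_forall fun ω => pow_nonneg (h0 ω).le N)
      have h2 : ∫ ω in S, (t ^ N) ∂μ ≤ ∫ ω in S, X ω ^ N ∂μ := by
        apply setIntegral_mono_on (integrableOn_const (measure_lt_top μ S).ne) hint.integrableOn hSmeas
        intro ω hω
        exact pow_le_pow_left₀ ht0.le (le_of_lt hω) N
      have h1' : ∫ ω in S, (t ^ N) ∂μ = p * t ^ N := by
        rw [setIntegral_const, smul_eq_mul]
        rfl
      linarith
    -- choose M
    obtain ⟨M, hM⟩ := exists_nat_gt (2 * |Real.log p| / ε + 1)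
    refine ⟨max M 1, fun N hN => ?_⟩
    have hN1 : 1 ≤ N := le_trans (le_max_right M 1) hN
    have hNM : (M : ℝ) ≤ (N : ℝ) := by exact_mod_cast le_trans (le_max_left M 1) hN
    have hn : (0:ℝ) < (N : ℝ) := by exact_mod_cast hN1
    have hNbig : 2 * |Real.log p| / ε < (N : ℝ) := by linarith
    -- R₀ N ≥ 0
    have hR0nn : 0 ≤ R₀ N := by
      rw [hR₀ N, haN N]
      have hlog0 : Real.log (a N) ≤ 0 := hLnonpos N
      nlinarith [one_div_pos.mpr hn]
    -- upper bound
    have hup : R₀ N < ε := by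
      rw [hR₀ N, haN N]
      have hbN := hbound N
      have hlogle : (N : ℝ) * Real.log t + Real.log p ≤ Real.log (a N) := by
        have hll := Real.log_le_log (by positivity : (0:ℝ) < t ^ N * p) hbN
        rw [Real.log_mul (pow_pos ht0 N).ne' hSpos.ne', Real.log_pow] at hll
        push_cast at hll
        linarith
      have hstep : -(1 / (N : ℝ)) * Real.log (a N)
          ≤ -(1 / (N : ℝ)) * ((N : ℝ) * Real.log t + Real.log p) := by
        nlinarith [one_div_pos.mpr hn, hlogle]
      have heq : -(1 / (N : ℝ)) * ((N : ℝ) * Real.log t + Real.log p)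
          = ε / 2 - Real.log p / (N : ℝ) := by
        field_simp [htlog]
        rw [htlog]; ring
      have hlast : -Real.log p / (N : ℝ) < ε / 2 := by
        rw [div_lt_iff₀ hn]
        have habs : -Real.log p ≤ |Real.log p| := neg_le_abs _
        have h5 : 2 * |Real.log p| < ε * (N : ℝ) := by
          rw [div_lt_iff₀ hε] at hNbig
          linarith
        linarith
      calc -(1 / (N : ℝ)) * Real.log (a N)
          ≤ ε / 2 - Real.log p / (N : ℝ) := by rw [← heq]; exact hstep
        _ = ε / 2 + (-Real.log p / (N : ℝ)) := by ring
        _ < ε / 2 + ε / 2 := by linarith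
        _ = ε := by ring
    rw [Real.dist_eq, sub_zero, abs_of_nonneg hR0nn]
    exact hup
end
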